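/- Let F_A be a free group on a set A with |A| > 1 and let κ = |F_A|. Then there exists a subset T of F_A (namely the complement of the set of reduced words beginning and ending with a letter from {a, a⁻¹} for a fixed a ∈ A) such that T is both left κ-thick and right κ-thick, but T is not κ-thick. -/

import Mathlib

open scoped Pointwise
open Cardinal

universe u

variable {G : Type u}

/-- `A` is left `κ`-large: `G = F * A` for some `F` with `|F| < κ`. -/
def LeftLarge [Group G] (κ : Cardinal.{u}) (A : Set G) : Prop :=
  ∃ F : Set G, #F < κ ∧ F * A = Set.univ

/-- `A` is right `κ`-large: `G = A * F` for some `F` with `|F| < κ`. -/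
def RightLarge [Group G] (κ : Cardinal.{u}) (A : Set G) : Prop :=
  ∃ F : Set G, #F < κ ∧ A * F = Set.univ

/-- `A` is `κ`-large: `G = F * A * F` for some `F` with `|F| < κ`. -/
def KLarge [Group G] (κ : Cardinal.{u}) (A : Set G) : Prop :=
  ∃ F : Set G, #F < κ ∧ F * A * F = Set.univ

/-- `A` is left `κ`-thick: for every `F` with `|F| < κ` there is `a ∈ A` with `F * a ⊆ A`. -/
def LeftThick [Group G] (κ : Cardinal.{u}) (A : Set G) : Prop :=
  ∀ F : Set G, #F < κ → ∃ a ∈ A, F * {a} ⊆ A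

/-- `A` is right `κ`-thick: for every `F` with `|F| < κ` there is `a ∈ A` with `a * F ⊆ A`. -/
def RightThick [Group G] (κ : Cardinal.{u}) (A : Set G) : Prop :=
  ∀ F : Set G, #F < κ → ∃ a ∈ A, {a} * F ⊆ A

/-- `A` is `κ`-thick: for every `F` with `|F| < κ` there is `a ∈ A` with `F * a * F ⊆ A`. -/
def KThick [Group G] (κ : Cardinal.{u}) (A : Set G) : Prop :=
  ∀ F : Set G, #F < κ → ∃ a ∈ A, F * {a} * F ⊆ A

/-- `G` is `κ`-normal: every subset of size `< κ` lies in a normal subgroup of size `< κ`. -/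
def KNormal (G : Type u) [Group G] (κ : Cardinal.{u}) : Prop :=
  ∀ F : Set G, #F < κ → ∃ H : Subgroup G, H.Normal ∧ #(H : Set G) < κ ∧ F ⊆ (H : Set G)

/-- `κ` is a singular cardinal: infinite, with cofinality strictly less than `κ`. -/
def Singular (κ : Cardinal.{u}) : Prop := ℵ₀ ≤ κ ∧ κ.ord.cof < κ

/-- The set of non-identity elements of the free group whose reduced word begins and
ends with a letter from `{a, a⁻¹}`. -/
def beginsEndsWith (A : Type u) [DecidableEq A] (a : A) : Set (FreeGroup A) :=
  {g | g ≠ 1 ∧ (g.toWord.head?.map Prod.fst) = some a ∧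
    (g.toWord.getLast?.map Prod.fst) = some a}

section ThickAux
variable {A : Type u} [DecidableEq A]
set_option linter.unusedSectionVars false

lemma thick_reduce_cons_of_ne {L : List (A × Bool)} {x : A × Bool}
    (hL : FreeGroup.reduce L = L) (h : L.head? ≠ some (x.1, !x.2)) :
    FreeGroup.reduce (x :: L) = x :: L := by
  rw [FreeGroup.reduce.cons, hL]
  cases L with
  | nil => rfl
  | cons hd tl =>
    simp only [List.head?_cons, ne_eq, Option.some.injEq] at h
    have : ¬ (x.1 = hd.1 ∧ x.2 = !hd.2) := by
      rintro ⟨h1, h2⟩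
      exact h (by cases hd; cases x; simp_all)
    simp [this]

lemma thick_invRev_append_singleton (L : List (A × Bool)) (x : A × Bool) :
    FreeGroup.invRev (L ++ [x]) = (x.1, !x.2) :: FreeGroup.invRev L := by
  simp [FreeGroup.invRev]

lemma thick_reduce_append_singleton_of_ne {L : List (A × Bool)} {x : A × Bool}
    (hL : FreeGroup.reduce L = L) (h : L.getLast? ≠ some (x.1, !x.2)) :
    FreeGroup.reduce (L ++ [x]) = L ++ [x] := by
  apply FreeGroup.invRev_injective
  rw [← FreeGroup.reduce_invRev]
  rw [thick_invRev_append_singleton]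
  apply thick_reduce_cons_of_ne
  · rw [FreeGroup.reduce_invRev, hL]
  · simp only [FreeGroup.invRev, List.head?_reverse, List.getLast?_map]
    intro hc
    simp only [Bool.not_not] at hc
    obtain ⟨p, hp, hpe⟩ := Option.map_eq_some_iff.1 hc
    apply h
    rw [hp]
    cases p; cases x; simp_all

lemma thick_toWord_mul (x y : FreeGroup A) :
    (x * y).toWord = FreeGroup.reduce (x.toWord ++ y.toWord) := by
  conv_lhs => rw [← FreeGroup.mk_toWord (x := x), ← FreeGroup.mk_toWord (x := y)]
  rw [FreeGroup.mul_mk, FreeGroup.toWord_mk]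

lemma thick_reduce_append_fresh (c : A) :
    ∀ (L : List (A × Bool)), c ∉ L.map Prod.fst →
      FreeGroup.reduce (L ++ [(c, true)]) = FreeGroup.reduce L ++ [(c, true)]
  | [], _ => rfl
  | x :: L, h => by
    have hx : c ≠ x.1 := by simp at h; tauto
    have hL : c ∉ L.map Prod.fst := by simp at h ⊢; tauto
    have ih := thick_reduce_append_fresh c L hL
    rw [List.cons_append, FreeGroup.reduce.cons, FreeGroup.reduce.cons, ih]
    cases hr : FreeGroup.reduce L with
    | nil =>
      have : ¬ (x.1 = c ∧ x.2 = !true) := fun ⟨h1, _⟩ => hx h1.symm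
      simp only [List.nil_append]
      rw [if_neg this]
      rfl
    | cons hd tl =>
      simp only [List.cons_append]
      by_cases hc : x.1 = hd.1 ∧ x.2 = !hd.2
      · rw [if_pos hc, if_pos hc]
      · rw [if_neg hc, if_neg hc]; simp

lemma thick_reduce_append_replicate (b : A) :
    ∀ (L : List (A × Bool)) (n : ℕ), L.length < n →
      n - L.length ≤ (FreeGroup.reduce (L ++ List.replicate n (b, true))).length ∧
      (FreeGroup.reduce (L ++ List.replicate n (b, true))).getLast? = some (b, true)
  | [], n, hn => by
    rw [List.nil_append, FreeGroup.reduce_replicate]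
    simp only [List.length_nil] at hn
    constructor
    · simp
    · rw [List.getLast?_replicate]
      simp [Nat.pos_iff_ne_zero.mp hn]
  | x :: L, n, hn => by
    simp only [List.length_cons] at hn
    have ih := thick_reduce_append_replicate b L n (by omega)
    rw [List.cons_append, FreeGroup.reduce.cons]
    cases hr : FreeGroup.reduce (L ++ List.replicate n (b, true)) with
    | nil => rw [hr] at ih; simp at ih
    | cons hd tl =>
      rw [hr] at ih
      obtain ⟨ihlen, ihlast⟩ := ih
      simp only [List.length_cons] at ihlen
      cases tl with
      | nil => exfalso; simp at ihlen; omega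
      | cons y tl' =>
        rw [List.getLast?_cons_cons] at ihlast
        dsimp only
        by_cases hc : x.1 = hd.1 ∧ x.2 = !hd.2
        · rw [if_pos hc]
          refine ⟨?_, ihlast⟩
          simp only [List.length_cons] at ihlen ⊢
          omega
        · rw [if_neg hc]
          refine ⟨?_, ?_⟩
          · simp only [List.length_cons] at ihlen ⊢; omega
          · rw [List.getLast?_cons_cons, List.getLast?_cons_cons]
            exact ihlast

/-- If the reduced word of `g` does not end with (a letter with base) `a`,
then `g` is not in `beginsEndsWith A a`. -/
lemma thick_notMem_beginsEndsWith {a : A} {g : FreeGroup A}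
    (h : g.toWord.getLast?.map Prod.fst ≠ some a) : g ∉ beginsEndsWith A a :=
  fun hg => h hg.2.2

lemma thick_invRev_head_fst (L : List (A × Bool)) :
    ((FreeGroup.invRev L).head?.map Prod.fst) = L.getLast?.map Prod.fst := by
  simp [FreeGroup.invRev, List.head?_reverse, List.getLast?_map, Option.map_map]
  rfl

lemma thick_invRev_getLast_fst (L : List (A × Bool)) :
    ((FreeGroup.invRev L).getLast?.map Prod.fst) = L.head?.map Prod.fst := by
  simp [FreeGroup.invRev, List.getLast?_reverse, List.head?_map, Option.map_map]
  rfl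

lemma thick_inv_mem_iff {a : A} {g : FreeGroup A} :
    g⁻¹ ∈ beginsEndsWith A a ↔ g ∈ beginsEndsWith A a := by
  unfold beginsEndsWith
  simp only [Set.mem_setOf_eq, ne_eq, inv_eq_one, FreeGroup.toWord_inv,
    thick_invRev_head_fst, thick_invRev_getLast_fst]
  tauto

lemma thick_getLast_mul_pow (x : FreeGroup A) (b : A) (n : ℕ)
    (h : x.toWord.length < n) :
    ((x * FreeGroup.of b ^ n).toWord.getLast?.map Prod.fst) = some b := by
  rw [thick_toWord_mul, FreeGroup.toWord_of_pow,
    (thick_reduce_append_replicate b x.toWord n h).2]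
  rfl

lemma thick_toWord_mul_fresh (x : FreeGroup A) (c : A)
    (h : c ∉ x.toWord.map Prod.fst) :
    (x * FreeGroup.of c).toWord = x.toWord ++ [(c, true)] := by
  rw [thick_toWord_mul, FreeGroup.toWord_of, thick_reduce_append_fresh c _ h,
    FreeGroup.reduce_toWord]

/-- Any element can be put into `beginsEndsWith A a` by multiplying by suitable
`(a, s)` letters on both sides. -/
lemma thick_exists_sandwich (a : A) (g : FreeGroup A) :
    ∃ s₁ s₂ : Bool, FreeGroup.mk [(a, s₁)] * g * FreeGroup.mk [(a, s₂)] ∈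
      beginsEndsWith A a := by
  classical
  set w := g.toWord with hw
  set s₂ : Bool := if w.getLast? = some (a, false) then false else true with hs₂
  have hlast : w.getLast? ≠ some (a, !s₂) := by
    by_cases h : w.getLast? = some (a, false) <;> simp [hs₂, h]
  set M := w ++ [(a, s₂)] with hM
  have hMred : FreeGroup.reduce M = M :=
    thick_reduce_append_singleton_of_ne (by rw [hw]; exact FreeGroup.reduce_toWord g) hlast
  set s₁ : Bool := if M.head? = some (a, false) then false else true with hs₁
  have hhead : M.head? ≠ some (a, !s₁) := by
    by_cases h : M.head? = some (a, false) <;> simp [hs₁, h]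
  have h2 : (g * FreeGroup.mk [(a, s₂)]).toWord = M := by
    rw [thick_toWord_mul, FreeGroup.toWord_mk, FreeGroup.reduce_singleton, ← hw, ← hM, hMred]
  have h3 : (FreeGroup.mk [(a, s₁)] * (g * FreeGroup.mk [(a, s₂)])).toWord
      = (a, s₁) :: M := by
    rw [thick_toWord_mul, h2, FreeGroup.toWord_mk, FreeGroup.reduce_singleton,
      List.singleton_append]
    exact thick_reduce_cons_of_ne hMred hhead
  refine ⟨s₁, s₂, ?_⟩
  rw [← mul_assoc] at h3
  refine ⟨?_, ?_, ?_⟩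
  · intro h1
    rw [h1, FreeGroup.toWord_one] at h3
    exact absurd h3.symm (List.cons_ne_nil _ _)
  · rw [h3]; rfl
  · rw [h3, ← List.cons_append, List.getLast?_concat]; rfl

end ThickAux

/-- For a free group `F_A` with `|A| > 1` there is a subset `T`
(namely the complement of `beginsEndsWith A a` for a fixed `a ∈ A`) which is both left
and right `κ`-thick, yet not `κ`-thick, where `κ = |F_A|`. -/

theorem exists_leftRightThick_not_thick (A : Type u) [DecidableEq A]
    (hA : 1 < #A) (a : A) :
    ∃ T : Set (FreeGroup A), T = (beginsEndsWith A a)ᶜ ∧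
      LeftThick (#(FreeGroup A)) T ∧ RightThick (#(FreeGroup A)) T ∧
      ¬ KThick (#(FreeGroup A)) T := by
  classical
  have hne : Nonempty A := ⟨a⟩
  have hκ : #(FreeGroup A) = max #A ℵ₀ := Cardinal.mk_freeGroup A
  have hκinf : ℵ₀ ≤ #(FreeGroup A) := by rw [hκ]; exact le_max_right _ _
  -- Left thickness
  have hLeft : LeftThick (#(FreeGroup A)) (beginsEndsWith A a)ᶜ := by
    intro F hF
    by_cases hfin : #F < ℵ₀
    · -- `F` is finite: use a large power of a letter `b ≠ a`.
      have hFfin : F.Finite := Cardinal.lt_aleph0_iff_set_finite.mp hfin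
      have : Nontrivial A := Cardinal.one_lt_iff_nontrivial.mp hA
      obtain ⟨b, hb⟩ := exists_ne a
      set n := hFfin.toFinset.sup (fun f => f.toWord.length) + 1 with hn
      have hlen : ∀ f ∈ F, f.toWord.length < n := by
        intro f hf
        have : f.toWord.length ≤ hFfin.toFinset.sup (fun f => f.toWord.length) :=
          Finset.le_sup (f := fun f : FreeGroup A => f.toWord.length) (hFfin.mem_toFinset.mpr hf)
        omega
      have key : ∀ f : FreeGroup A, f.toWord.length < n →
          f * FreeGroup.of b ^ n ∉ beginsEndsWith A a := by
        intro f hfl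
        apply thick_notMem_beginsEndsWith
        rw [thick_getLast_mul_pow f b n hfl]
        simp [hb]
      refine ⟨FreeGroup.of b ^ n, ?_, ?_⟩
      · have := key 1 (by simp only [FreeGroup.toWord_one, List.length_nil]; omega)
        rwa [one_mul] at this
      · rintro z hz
        obtain ⟨f, hf, t', ht', rfl⟩ := hz
        rw [Set.mem_singleton_iff] at ht'
        subst ht'
        exact key f (hlen f hf)
    · -- `F` is infinite: use a fresh letter.
      push_neg at hfin
      have hFA : #F < #A := by
        rcases le_or_gt #A ℵ₀ with h | h
        · exfalso
          rw [hκ, max_eq_right h] at hF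
          exact absurd hF (not_lt.mpr hfin)
        · rwa [hκ, max_eq_left h.le] at hF
      have hAinf : ℵ₀ ≤ #A := (hfin.trans_lt hFA).le
      set U₀ : Set A := ⋃ f ∈ F, {x : A | x ∈ f.toWord.map Prod.fst} with hU₀def
      have hU₀ : #U₀ < #A := by
        have h1 : #U₀ ≤ #F * ⨆ f : F, #({x : A | x ∈ (f : FreeGroup A).toWord.map Prod.fst}) :=
          Cardinal.mk_biUnion_le _ _
        have h2 : (⨆ f : F, #({x : A | x ∈ (f : FreeGroup A).toWord.map Prod.fst})) ≤ ℵ₀ := by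
          apply ciSup_le'
          intro f
          exact ((List.finite_toSet _).lt_aleph0).le
        calc #U₀ ≤ #F * ℵ₀ := h1.trans (mul_le_mul_right h2 _)
          _ = max #F ℵ₀ := Cardinal.mul_eq_max hfin le_rfl
          _ = #F := max_eq_left hfin
          _ < #A := hFA
      have hU : #(U₀ ∪ {a} : Set A) < #A := by
        refine lt_of_le_of_lt (Cardinal.mk_union_le _ _) ?_
        have h1 : #({a} : Set A) = 1 := Cardinal.mk_singleton a
        rw [h1]
        exact Cardinal.add_lt_of_lt hAinf hU₀ (lt_of_lt_of_le one_lt_aleph0 hAinf)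
      obtain ⟨c, hc⟩ : ∃ c, c ∉ (U₀ ∪ {a} : Set A) := by
        by_contra h
        push_neg at h
        have : (U₀ ∪ {a} : Set A) = Set.univ := Set.eq_univ_of_forall h
        rw [this, Cardinal.mk_univ] at hU
        exact lt_irrefl _ hU
      have hca : c ≠ a := fun h => hc (Set.mem_union_right _ (by simp [h]))
      have hcf : ∀ f ∈ F, c ∉ f.toWord.map Prod.fst := by
        intro f hf hmem
        exact hc (Set.mem_union_left _ (Set.mem_biUnion hf hmem))
      have key : ∀ f : FreeGroup A, c ∉ f.toWord.map Prod.fst →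
          f * FreeGroup.of c ∉ beginsEndsWith A a := by
        intro f hfc
        apply thick_notMem_beginsEndsWith
        rw [thick_toWord_mul_fresh f c hfc, List.getLast?_concat]
        simp [hca]
      refine ⟨FreeGroup.of c, ?_, ?_⟩
      · have := key 1 (by simp)
        rwa [one_mul] at this
      · rintro z hz
        obtain ⟨f, hf, t', ht', rfl⟩ := hz
        rw [Set.mem_singleton_iff] at ht'
        subst ht'
        exact key f (hcf f hf)
  refine ⟨(beginsEndsWith A a)ᶜ, rfl, hLeft, ?_, ?_⟩
  · -- Right thickness, by symmetry.
    intro F hF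
    have hFinv : #(F⁻¹ : Set (FreeGroup A)) < #(FreeGroup A) := by
      have : #(F⁻¹ : Set (FreeGroup A)) = #F := by
        rw [← Set.image_inv_eq_inv]
        exact Cardinal.mk_image_eq inv_injective
      rwa [this]
    obtain ⟨t, ht, hsub⟩ := hLeft F⁻¹ hFinv
    refine ⟨t⁻¹, ?_, ?_⟩
    · intro h
      exact ht (thick_inv_mem_iff.mp h)
    · rintro z hz
      obtain ⟨t', ht', f, hf, rfl⟩ := hz
      rw [Set.mem_singleton_iff] at ht'
      subst ht'
      have hmem : f⁻¹ * t ∈ (beginsEndsWith A a)ᶜ :=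
        hsub (Set.mul_mem_mul (Set.inv_mem_inv.mpr hf) (Set.mem_singleton t))
      intro h
      apply hmem
      rw [← thick_inv_mem_iff]
      rwa [mul_inv_rev, inv_inv]
  · -- Not κ-thick.
    intro hK
    set F : Set (FreeGroup A) := {FreeGroup.of a, (FreeGroup.of a)⁻¹} with hFdef
    have hFsmall : #F < #(FreeGroup A) :=
      lt_of_lt_of_le (Set.Finite.lt_aleph0 (Set.toFinite F)) hκinf
    obtain ⟨t, ht, hsub⟩ := hK F hFsmall
    obtain ⟨s₁, s₂, hmem⟩ := thick_exists_sandwich a t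
    have hmk : ∀ s : Bool, FreeGroup.mk [(a, s)] ∈ F := by
      intro s
      cases s
      · right
        rw [Set.mem_singleton_iff]
        show FreeGroup.mk [(a, false)] = (FreeGroup.mk [(a, true)])⁻¹
        rw [FreeGroup.inv_mk]
        rfl
      · left
        rfl
    have : FreeGroup.mk [(a, s₁)] * t * FreeGroup.mk [(a, s₂)] ∈ F * {t} * F :=
      Set.mul_mem_mul (Set.mul_mem_mul (hmk s₁) (Set.mem_singleton t)) (hmk s₂)
    exact hsub this hmem
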